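/- The series Σ_{n=1}^∞ (−1)^{n−1}·(H_{4n} + H_n − 2H_{2n}) converges and its sum equals (1/8)·log 2 − (3 − 2√2)·π/16. -/

import Mathlib

open Filter Topology

/-- The `n`-th harmonic number `Hₙ = Σ_{j=1}^n 1/j`. -/
noncomputable def H (n : ℕ) : ℝ := ∑ j ∈ Finset.range n, 1 / ((j : ℝ) + 1)

lemma H_succ (n : ℕ) : H (n+1) = H n + 1/((n:ℝ)+1) := by
  simp [H, Finset.sum_range_succ]

noncomputable def fq (j : ℕ) : ℝ :=
  3/(8*(j:ℝ)+6) - 1/(8*(j:ℝ)+5) - 1/(8*(j:ℝ)+7) - 1/(8*(j:ℝ)+8)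

lemma frac_key (x : ℝ) (hx : 0 ≤ x) :
    2/(4*x+3) + 2/(4*x+4) - 1/(2*x+2)
      - (1/(8*x+5) + 1/(8*x+6) + 1/(8*x+7) + 1/(8*x+8))
    = 3/(8*x+6) - 1/(8*x+5) - 1/(8*x+7) - 1/(8*x+8) := by
  have h1 : (4*x+3) ≠ 0 := by positivity
  have h2 : (4*x+4) ≠ 0 := by positivity
  have h3 : (2*x+2) ≠ 0 := by positivity
  have h4 : (8*x+6) ≠ 0 := by positivity
  have e1 : 2/(4*x+4) = 1/(2*x+2) := by rw [div_eq_div_iff h2 h3]; ring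
  have e2 : 2/(4*x+3) = 4/(8*x+6) := by rw [div_eq_div_iff h1 h4]; ring
  rw [e1, e2]
  ring

lemma sum_even (m : ℕ) :
    (∑ n ∈ Finset.range (2*m), (-1:ℝ)^n * (H (4*(n+1)) + H (n+1) - 2*H (2*(n+1))))
      = ∑ j ∈ Finset.range m, fq j := by
  induction m with
  | zero => simp
  | succ m ih =>
    have h2 : 2*(m+1) = (2*m)+1+1 := by ring
    rw [h2, Finset.sum_range_succ, Finset.sum_range_succ, ih, Finset.sum_range_succ]
    have p1 : (-1:ℝ)^(2*m) = 1 := by rw [pow_mul]; norm_num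
    have p2 : (-1:ℝ)^(2*m+1) = -1 := by rw [pow_succ, p1]; norm_num
    have e1 : 4*((2*m)+1+1) = (8*m+4)+1+1+1+1 := by ring
    have e2 : 2*((2*m)+1+1) = (4*m+2)+1+1 := by ring
    have e3 : 4*((2*m)+1) = 8*m+4 := by ring
    have e4 : 2*((2*m)+1) = 4*m+2 := by ring
    rw [e1, e2, e3, e4, p1, p2]
    simp only [H_succ]
    simp only [fq]
    push_cast
    linear_combination frac_key (m:ℝ) (by positivity)

noncomputable def q (x : ℝ) : ℝ := x^4*(x^2+2*x-1)/((1+x)*(1+x^2)*(1+x^4))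

noncomputable def Fa (x : ℝ) : ℝ :=
  -(1/2)*Real.log (1+x) + (1/2)*Real.log (1+x^2) + (1/8)*Real.log (1+x^4)
  + (Real.sqrt 2/4)*(Real.arctan (Real.sqrt 2*x+1) + Real.arctan (Real.sqrt 2*x-1))
  - (3/4)*Real.arctan (x^2)

lemma Fa_deriv (x : ℝ) (hx : 0 ≤ x) : HasDerivAt Fa (q x) x := by
  set s := Real.sqrt 2 with hsdef
  have hs : s^2 = 2 := Real.sq_sqrt (by norm_num)
  have d1 : (1+x) ≠ 0 := by positivity
  have d2 : (1+x^2) ≠ 0 := by positivity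
  have d3 : (1+x^4) ≠ 0 := by positivity
  have l1 : HasDerivAt (fun y : ℝ => Real.log (1+y)) (1/(1+x)) x := by
    simpa using ((hasDerivAt_id x).const_add 1).log d1
  have l2 : HasDerivAt (fun y : ℝ => Real.log (1+y^2)) (2*x/(1+x^2)) x := by
    simpa using ((hasDerivAt_pow 2 x).const_add 1).log d2
  have l3 : HasDerivAt (fun y : ℝ => Real.log (1+y^4)) (4*x^3/(1+x^4)) x := by
    simpa using ((hasDerivAt_pow 4 x).const_add 1).log d3
  have a1 : HasDerivAt (fun y : ℝ => Real.arctan (s*y+1)) (1/(1+(s*x+1)^2)*s) x := by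
    simpa using (((hasDerivAt_id x).const_mul s).add_const 1).arctan
  have a2 : HasDerivAt (fun y : ℝ => Real.arctan (s*y-1)) (1/(1+(s*x-1)^2)*s) x := by
    simpa using (((hasDerivAt_id x).const_mul s).sub_const 1).arctan
  have a3 : HasDerivAt (fun y : ℝ => Real.arctan (y^2)) (1/(1+(x^2)^2)*(2*x)) x := by
    simpa using (hasDerivAt_pow 2 x).arctan
  have total := ((((l1.const_mul (-(1/2):ℝ)).add (l2.const_mul ((1/2):ℝ))).add
      (l3.const_mul ((1/8):ℝ))).add ((a1.add a2).const_mul (s/4))).sub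
      (a3.const_mul ((3/4):ℝ))
  refine total.congr_deriv ?_
  symm
  have hA : 1+(s*x+1)^2 = 2*x^2+2*s*x+2 := by linear_combination x^2*hs
  have hB : 1+(s*x-1)^2 = 2*x^2-2*s*x+2 := by linear_combination x^2*hs
  have hA0 : (2*x^2+2*s*x+2 : ℝ) ≠ 0 := by
    have : 0 ≤ s*x := mul_nonneg (Real.sqrt_nonneg 2) hx
    positivity
  have hB0 : (2*x^2-2*s*x+2 : ℝ) ≠ 0 := by
    intro h
    have := hs
    nlinarith [sq_nonneg (s*x - 2), sq_nonneg x, sq_nonneg (s-x)]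
  have hAB : (2*x^2+2*s*x+2)*(2*x^2-2*s*x+2) = 4*(1+x^4) := by linear_combination (-4*x^2)*hs
  have hsum : s/4*(1/(2*x^2+2*s*x+2)*s + 1/(2*x^2-2*s*x+2)*s) = (x^2+1)/(2*(1+x^4)) := by
    have e : 1/(2*x^2+2*s*x+2)*s + 1/(2*x^2-2*s*x+2)*s
        = s*((2*x^2+2*s*x+2)+(2*x^2-2*s*x+2))/((2*x^2+2*s*x+2)*(2*x^2-2*s*x+2)) := by
      rw [div_mul_eq_mul_div, div_mul_eq_mul_div, div_add_div _ _ hA0 hB0]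
      ring
    rw [e, hAB, show s/4*(s*((2*x^2+2*s*x+2)+(2*x^2-2*s*x+2))/(4*(1+x^4)))
        = s^2*(4*x^2+4)/4/(4*(1+x^4)) by ring, hs]
    field_simp
    ring
  rw [q, hA, hB, hsum]
  field_simp
  ring

lemma q_cont : ContinuousOn q (Set.uIcc (0:ℝ) 1) := by
  apply ContinuousOn.div (by fun_prop) (by fun_prop)
  intro x hx
  rw [Set.uIcc_of_le (by norm_num : (0:ℝ) ≤ 1)] at hx
  have h0 := hx.1
  positivity

lemma integral_q :
    ∫ x in (0:ℝ)..1, q x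
      = (1 / 8) * Real.log 2 - (3 - 2 * Real.sqrt 2) * Real.pi / 16 := by
  have hderiv : ∀ x ∈ Set.uIcc (0:ℝ) 1, HasDerivAt Fa (q x) x := by
    intro x hx
    rw [Set.uIcc_of_le (by norm_num : (0:ℝ) ≤ 1)] at hx
    exact Fa_deriv x hx.1
  rw [intervalIntegral.integral_eq_sub_of_hasDerivAt hderiv
    (q_cont.intervalIntegrable)]
  have hs : Real.sqrt 2 ^ 2 = 2 := Real.sq_sqrt (by norm_num)
  have h0 : Fa 0 = 0 := by
    simp [Fa, Real.arctan_neg, Real.arctan_one]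
  have hinv : (Real.sqrt 2 + 1)⁻¹ = Real.sqrt 2 - 1 := by
    apply inv_eq_of_mul_eq_one_right
    linear_combination hs
  have harc : Real.arctan (Real.sqrt 2 - 1) = Real.pi/2 - Real.arctan (Real.sqrt 2 + 1) := by
    rw [← hinv]
    exact Real.arctan_inv_of_pos (by positivity)
  have h1 : Fa 1 = (1/8)*Real.log 2 + (Real.sqrt 2/4)*(Real.pi/2) - (3/4)*(Real.pi/4) := by
    simp only [Fa, one_pow, Real.arctan_one, mul_one]
    rw [harc]
    ring
  rw [h0, h1]
  ring

lemma sum_fq_int (m : ℕ) :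
    ∑ j ∈ Finset.range m, fq j
      = (∫ x in (0:ℝ)..1, q x) - ∫ x in (0:ℝ)..1, q x * x^(8*m) := by
  have hint : ∀ j : ℕ, IntervalIntegrable
      (fun x : ℝ => 3*x^(8*j+5) - x^(8*j+4) - x^(8*j+6) - x^(8*j+7)) MeasureTheory.volume 0 1 :=
    fun j => Continuous.intervalIntegrable
      ((((continuous_const.mul (continuous_pow _)).sub (continuous_pow _)).sub
        (continuous_pow _)).sub (continuous_pow _)) 0 1
  have hf : ∀ j : ℕ, fq j
      = ∫ x in (0:ℝ)..1, (3*x^(8*j+5) - x^(8*j+4) - x^(8*j+6) - x^(8*j+7)) := by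
    intro j
    rw [intervalIntegral.integral_sub ((((intervalIntegral.intervalIntegrable_pow _).const_mul 3).sub
          (intervalIntegral.intervalIntegrable_pow _)).sub (intervalIntegral.intervalIntegrable_pow _))
        (intervalIntegral.intervalIntegrable_pow _),
      intervalIntegral.integral_sub (((intervalIntegral.intervalIntegrable_pow _).const_mul 3).sub
          (intervalIntegral.intervalIntegrable_pow _)) (intervalIntegral.intervalIntegrable_pow _),
      intervalIntegral.integral_sub ((intervalIntegral.intervalIntegrable_pow _).const_mul 3)
        (intervalIntegral.intervalIntegrable_pow _),
      intervalIntegral.integral_const_mul, integral_pow, integral_pow, integral_pow, integral_pow]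
    simp only [fq, one_pow, zero_pow, Nat.succ_ne_zero]
    push_cast
    norm_num
    ring
  rw [Finset.sum_congr rfl (fun j _ => hf j), ← intervalIntegral.integral_finset_sum
    (fun j _ => hint j)]
  have hq_int : IntervalIntegrable q MeasureTheory.volume 0 1 := q_cont.intervalIntegrable
  have hqm_int : IntervalIntegrable (fun x => q x * x^(8*m)) MeasureTheory.volume 0 1 :=
    hq_int.mul_continuousOn (by fun_prop)
  rw [← intervalIntegral.integral_sub hq_int hqm_int]
  apply intervalIntegral.integral_congr
  intro x hx
  show (∑ i ∈ Finset.range m, (3*x^(8*i+5) - x^(8*i+4) - x^(8*i+6) - x^(8*i+7)))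
    = q x - q x * x^(8*m)
  rw [Set.uIcc_of_le (by norm_num : (0:ℝ) ≤ 1)] at hx
  have hne : ((1+x)*(1+x^2)*(1+x^4)) ≠ 0 := by
    have := hx.1; positivity
  have hq8 : q x * (1 - x^8) = 3*x^5 - x^4 - x^6 - x^7 := by
    rw [q, div_mul_eq_mul_div, div_eq_iff hne]; ring
  have hg := geom_sum_mul (x^8) m
  have hterm : ∀ j ∈ Finset.range m, 3*x^(8*j+5) - x^(8*j+4) - x^(8*j+6) - x^(8*j+7)
      = (x^8)^j * (3*x^5 - x^4 - x^6 - x^7) := by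
    intro j _
    simp only [pow_add, pow_mul]
    ring
  rw [Finset.sum_congr rfl hterm, ← Finset.sum_mul]
  have hxm : x^(8*m) = (x^8)^m := by rw [← pow_mul]
  rw [hxm]
  linear_combination (-(∑ i ∈ Finset.range m, (x^8)^i))*hq8 - q x * hg

lemma err_bound (m : ℕ) :
    |∫ x in (0:ℝ)..1, q x * x^(8*m)| ≤ 2/(8*(m:ℝ)+1) := by
  have hb : ∀ᵐ t ∂MeasureTheory.volume.restrict (Set.uIoc (0:ℝ) 1),
      ‖q t * t^(8*m)‖ ≤ 2 * t^(8*m) := by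
    apply MeasureTheory.ae_restrict_of_forall_mem measurableSet_uIoc
    intro x hx
    rw [Set.uIoc_of_le (by norm_num : (0:ℝ) ≤ 1)] at hx
    obtain ⟨hx0, hx1⟩ := hx
    have hxn : (0:ℝ) ≤ x ^ (8*m) := by positivity
    rw [norm_mul, norm_pow, Real.norm_eq_abs, Real.norm_eq_abs, abs_of_pos hx0]
    apply mul_le_mul_of_nonneg_right _ hxn
    rw [q, abs_div]
    have hden : (1:ℝ) ≤ |(1+x)*(1+x^2)*(1+x^4)| := by
      rw [abs_of_pos (by positivity)]
      have e1 : (1:ℝ) ≤ 1+x := by linarith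
      have e2 : (1:ℝ) ≤ 1+x^2 := by nlinarith [sq_nonneg x]
      have e3 : (1:ℝ) ≤ 1+x^4 := by nlinarith [pow_nonneg hx0.le 4]
      calc (1:ℝ) = 1*1*1 := by norm_num
        _ ≤ (1+x)*(1+x^2)*(1+x^4) :=
            mul_le_mul (mul_le_mul e1 e2 one_pos.le (by linarith)) e3 one_pos.le (by positivity)
    calc |x^4*(x^2+2*x-1)| / |(1+x)*(1+x^2)*(1+x^4)|
        ≤ |x^4*(x^2+2*x-1)| := div_le_self (abs_nonneg _) hden
      _ ≤ 2 := by
          rw [abs_le]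
          constructor <;> nlinarith [pow_le_one₀ hx0.le hx1 (n := 4), sq_nonneg x,
            pow_nonneg hx0.le 4]
  have hgint : IntervalIntegrable (fun t : ℝ => 2 * t^(8*m)) MeasureTheory.volume 0 1 :=
    Continuous.intervalIntegrable (continuous_const.mul (continuous_pow _)) 0 1
  have key := intervalIntegral.norm_integral_le_abs_of_norm_le (μ := MeasureTheory.volume)
    (f := fun x : ℝ => q x * x^(8*m)) (a := 0) (b := 1) hb hgint
  have hval : (∫ t in (0:ℝ)..1, 2*t^(8*m)) = 2/(8*(m:ℝ)+1) := by
    rw [intervalIntegral.integral_const_mul, integral_pow]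
    rw [one_pow, zero_pow (by omega)]
    push_cast
    norm_num
    ring
  rw [Real.norm_eq_abs, hval,
    abs_of_nonneg (by positivity : (0:ℝ) ≤ 2/(8*(m:ℝ)+1))] at key
  exact key

lemma tendsto_sum_fq :
    Tendsto (fun m => ∑ j ∈ Finset.range m, fq j) atTop
      (𝓝 ((1 / 8) * Real.log 2 - (3 - 2 * Real.sqrt 2) * Real.pi / 16)) := by
  have herr : Tendsto (fun m : ℕ => ∫ x in (0:ℝ)..1, q x * x^(8*m)) atTop (𝓝 0) := by
    apply squeeze_zero_norm (fun m => (err_bound m))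
    have h1 : Tendsto (fun m : ℕ => 8*(m:ℝ)+1) atTop atTop := by
      apply tendsto_atTop_add_const_right
      exact (tendsto_natCast_atTop_atTop).const_mul_atTop (by norm_num)
    have := h1.inv_tendsto_atTop.const_mul (2:ℝ)
    simpa [div_eq_mul_inv] using this
  have h2 : Tendsto (fun m : ℕ => (∫ x in (0:ℝ)..1, q x) - ∫ x in (0:ℝ)..1, q x * x^(8*m))
      atTop (𝓝 ((∫ x in (0:ℝ)..1, q x) - 0)) := tendsto_const_nhds.sub herr
  rw [sub_zero] at h2
  have h3 := h2.congr (fun m => (sum_fq_int m).symm)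
  rwa [integral_q] at h3

-- small-term lemmas
lemma Hdiff (n : ℕ) : H (2*n) - H n
    = ∑ k ∈ Finset.range n, 1/((2*(k:ℝ)+1)*(2*(k:ℝ)+2)) := by
  induction n with
  | zero => simp
  | succ n ih =>
    have e1 : 2*(n+1) = (2*n)+1+1 := by ring
    rw [e1, H_succ, H_succ, H_succ, Finset.sum_range_succ, ← ih]
    have h1 : (2*(n:ℝ)+1) ≠ 0 := by positivity
    have h2 : (2*(n:ℝ)+2) ≠ 0 := by positivity
    have h3 : ((n:ℝ)+1) ≠ 0 := by positivity
    have key : 1/((2*(n:ℝ))+1) + 1/((2*(n:ℝ)+1)+1) - 1/((n:ℝ)+1)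
        = 1/((2*(n:ℝ)+1)*(2*(n:ℝ)+2)) := by
      field_simp
      ring
    push_cast
    linear_combination key

lemma a_eq (n : ℕ) : H (4*n) + H n - 2*H (2*n)
    = ∑ k ∈ Finset.Ico n (2*n), 1/((2*(k:ℝ)+1)*(2*(k:ℝ)+2)) := by
  have h1 := Hdiff (2*n)
  have h2 := Hdiff n
  rw [show 2*(2*n) = 4*n by ring] at h1
  rw [Finset.sum_Ico_eq_sub _ (by omega : n ≤ 2*n)]
  linear_combination h1 - h2

lemma a_nonneg (n : ℕ) : 0 ≤ H (4*n) + H n - 2*H (2*n) := by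
  rw [a_eq]
  apply Finset.sum_nonneg
  intro k _
  positivity

lemma a_le (n : ℕ) (hn : 1 ≤ n) : H (4*n) + H n - 2*H (2*n) ≤ 1/(2*(n:ℝ)+1) := by
  rw [a_eq]
  calc ∑ k ∈ Finset.Ico n (2*n), 1/((2*(k:ℝ)+1)*(2*(k:ℝ)+2))
      ≤ ∑ k ∈ Finset.Ico n (2*n), 1/((2*(n:ℝ)+1)*(2*(n:ℝ)+2)) := by
        apply Finset.sum_le_sum
        intro k hk
        have hkn : n ≤ k := (Finset.mem_Ico.mp hk).1
        have hc : (n:ℝ) ≤ k := Nat.cast_le.mpr hkn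
        apply one_div_le_one_div_of_le (by positivity)
        apply mul_le_mul (by linarith) (by linarith) (by positivity) (by positivity)
    _ = (n:ℝ) * (1/((2*(n:ℝ)+1)*(2*(n:ℝ)+2))) := by
        rw [Finset.sum_const, Nat.card_Ico]
        rw [show 2*n - n = n by omega]
        simp [nsmul_eq_mul]
    _ ≤ 1/(2*(n:ℝ)+1) := by
        have hn' : (1:ℝ) ≤ n := by exact_mod_cast hn
        rw [mul_one_div, div_le_div_iff₀ (by positivity) (by positivity)]
        nlinarith

/-- The series `Σ_{n=1}^∞ (−1)^{n−1}(H_{4n} + H_n − 2H_{2n})` converges,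
with sum `(1/8)·log 2 − (3 − 2√2)·π/16`. -/
theorem stmt_18 :
    Tendsto (fun m => ∑ n ∈ Finset.range m,
        (-1 : ℝ) ^ n * (H (4 * (n + 1)) + H (n + 1) - 2 * H (2 * (n + 1))))
      atTop
      (𝓝 ((1 / 8) * Real.log 2 - (3 - 2 * Real.sqrt 2) * Real.pi / 16)) := by
  set L := (1 / 8) * Real.log 2 - (3 - 2 * Real.sqrt 2) * Real.pi / 16 with hL
  set S := fun m => ∑ n ∈ Finset.range m,
      (-1 : ℝ) ^ n * (H (4 * (n + 1)) + H (n + 1) - 2 * H (2 * (n + 1))) with hS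
  have he : Tendsto (fun m => S (2*m)) atTop (𝓝 L) := by
    have := tendsto_sum_fq
    apply this.congr
    intro m
    exact (sum_even m).symm
  have hterm : Tendsto (fun m : ℕ => H (4*(2*m+1)) + H (2*m+1) - 2*H (2*(2*m+1)))
      atTop (𝓝 0) := by
    apply squeeze_zero (fun m => a_nonneg (2*m+1)) (fun m => a_le (2*m+1) (by omega))
    have h1 : Tendsto (fun m : ℕ => 2*((2*(m:ℝ))+1)+1) atTop atTop := by
      apply tendsto_atTop_add_const_right
      apply Tendsto.const_mul_atTop (by norm_num : (0:ℝ) < 2)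
      apply tendsto_atTop_add_const_right
      exact (tendsto_natCast_atTop_atTop).const_mul_atTop (by norm_num)
    have := h1.inv_tendsto_atTop
    apply this.congr
    intro m
    simp only [Pi.inv_apply, one_div]
    push_cast
    ring_nf
  have ho : Tendsto (fun m => S (2*m+1)) atTop (𝓝 L) := by
    have hstep : ∀ m : ℕ, S (2*m+1) = S (2*m)
        + (H (4*(2*m+1)) + H (2*m+1) - 2*H (2*(2*m+1))) := by
      intro m
      simp only [hS]
      rw [Finset.sum_range_succ]
      have p1 : (-1:ℝ)^(2*m) = 1 := by rw [pow_mul]; norm_num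
      rw [p1, one_mul]
    have := he.add hterm
    rw [add_zero] at this
    apply this.congr
    intro m
    exact (hstep m).symm
  rw [Metric.tendsto_atTop] at he ho ⊢
  intro ε hε
  obtain ⟨N1, hN1⟩ := he ε hε
  obtain ⟨N2, hN2⟩ := ho ε hε
  refine ⟨2*(N1+N2)+2, fun n hn => ?_⟩
  rcases Nat.even_or_odd n with ⟨m, hm⟩ | ⟨m, hm⟩
  · have hmn : n = 2*m := by omega
    rw [hmn]
    exact hN1 m (by omega)
  · have hmn : n = 2*m+1 := by omega
    rw [hmn]
    exact hN2 m (by omega)
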